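/- For all u, v ∈ V and all ring embeddings σ, σ' : E → ℂ, one has B_ℂ(p_σ(u⊗1), p_{σ'}(v⊗1)) = σ(Φ(u,v)) if σ' = σ∘ι, and B_ℂ(p_σ(u⊗1), p_{σ'}(v⊗1)) = 0 if σ' ≠ σ∘ι. In particular B_ℂ vanishes identically on V_σ × V_{σ'} whenever σ' ≠ σ∘ι (equivalently, whenever σ' is not the conjugate embedding conj∘σ). -/

import Mathlib

open scoped TensorProduct

/-- The action of `e : E` on `ℂ ⊗[ℚ] V` (the `E`-module structure
`e • (c ⊗ v) = c ⊗ (e • v)` on `V ⊗_ℚ ℂ`). -/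
noncomputable def actC (E : Type*) {V : Type*} [Field E] [CharZero E]
    [AddCommGroup V] [Module E V] [Module ℚ V] [IsScalarTower ℚ E V] (e : E) :
    ℂ ⊗[ℚ] V →ₗ[ℂ] ℂ ⊗[ℚ] V :=
  LinearMap.baseChange ℂ ((LinearMap.lsmul E V e).restrictScalars ℚ)

/-- `V_σ = {ξ ∈ V ⊗_ℚ ℂ : e • ξ = σ(e) · ξ for all e ∈ E}`. -/
noncomputable def VsigC (E : Type*) {V : Type*} [Field E] [CharZero E]
    [AddCommGroup V] [Module E V] [Module ℚ V] [IsScalarTower ℚ E V] (σ : E →+* ℂ) :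
    Submodule ℂ (ℂ ⊗[ℚ] V) :=
  ⨅ e : E, LinearMap.ker (actC E e - σ e • LinearMap.id)

/-- `E = E₀(θ)` a CM field with CM involution `ι`, `Φ` a nondegenerate
hermitian sesquilinear form on the `E`-vector space `V`, `B` the `ℂ`-bilinear extension
of `tr∘Φ` to `V ⊗_ℚ ℂ`, and `p σ` the projections onto the `V_σ`.  Then
`B (p σ (u⊗1)) (p σ' (v⊗1)) = σ (Φ u v)` if `σ' = σ∘ι`, and `= 0` otherwise; in
particular `B` vanishes identically on `V_σ × V_σ'` whenever `σ' ≠ σ∘ι`. -/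
theorem stmt4 (E₀ E V : Type*) [Field E₀] [NumberField E₀] [Field E] [NumberField E]
    [Algebra E₀ E] [IsScalarTower ℚ E₀ E]
    (htotreal : ∀ (σ : E₀ →+* ℂ) (x : E₀), (σ x).im = 0)
    (s : ℕ) (hs : Module.finrank ℚ E₀ = s)
    (θ : E) (hθ : θ ∉ Set.range (algebraMap E₀ E))
    (θ0 : E₀) (hθ0 : algebraMap E₀ E θ0 = θ ^ 2)
    (hθ0neg : ∀ σ : E₀ →+* ℝ, σ θ0 < 0)
    (hgen : ∀ x : E, ∃ a b : E₀, x = algebraMap E₀ E a + algebraMap E₀ E b * θ)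
    (ι : E →+* E) (hιfix : ∀ a : E₀, ι (algebraMap E₀ E a) = algebraMap E₀ E a)
    (hιθ : ι θ = -θ)
    [AddCommGroup V] [Module E V] [Module ℚ V] [IsScalarTower ℚ E V]
    [FiniteDimensional E V]
    (Φ : V → V → E)
    (hΦadd1 : ∀ x x' y, Φ (x + x') y = Φ x y + Φ x' y)
    (hΦsmul1 : ∀ (e : E) (x y : V), Φ (e • x) y = e * Φ x y)
    (hΦadd2 : ∀ x y y', Φ x (y + y') = Φ x y + Φ x y')
    (hΦsmul2 : ∀ (e : E) (x y : V), Φ x (e • y) = ι e * Φ x y)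
    (hΦherm : ∀ x y, Φ y x = ι (Φ x y))
    (hΦnondeg : ∀ x, (∀ y, Φ x y = 0) → x = 0)
    (B : (ℂ ⊗[ℚ] V) →ₗ[ℂ] (ℂ ⊗[ℚ] V) →ₗ[ℂ] ℂ)
    (hB : ∀ (c c' : ℂ) (u v : V),
      B (c ⊗ₜ[ℚ] u) (c' ⊗ₜ[ℚ] v) = c * c' * ((Algebra.trace ℚ E (Φ u v) : ℚ) : ℂ))
    [DecidableEq (E →+* ℂ)]
    (hInternal : DirectSum.IsInternal (fun σ : E →+* ℂ => VsigC E (V := V) σ))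
    (p : (E →+* ℂ) → (ℂ ⊗[ℚ] V) →ₗ[ℂ] ℂ ⊗[ℚ] V)
    (hp1 : ∀ (σ : E →+* ℂ) (ξ : ℂ ⊗[ℚ] V), p σ ξ ∈ VsigC E (V := V) σ)
    (hp2 : ∀ (σ : E →+* ℂ) (ξ : ℂ ⊗[ℚ] V), ξ ∈ VsigC E (V := V) σ → p σ ξ = ξ)
    (hp3 : ∀ (σ σ' : E →+* ℂ), σ ≠ σ' →
      ∀ ξ ∈ VsigC E (V := V) σ', p σ ξ = 0) :
    (∀ (u v : V) (σ σ' : E →+* ℂ),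
      (σ' = σ.comp ι →
        B (p σ ((1 : ℂ) ⊗ₜ[ℚ] u)) (p σ' ((1 : ℂ) ⊗ₜ[ℚ] v)) = σ (Φ u v)) ∧
      (σ' ≠ σ.comp ι →
        B (p σ ((1 : ℂ) ⊗ₜ[ℚ] u)) (p σ' ((1 : ℂ) ⊗ₜ[ℚ] v)) = 0)) ∧
    (∀ (σ σ' : E →+* ℂ), σ' ≠ σ.comp ι →
      ∀ ξ ∈ VsigC E (V := V) σ, ∀ ζ ∈ VsigC E (V := V) σ', B ξ ζ = 0) := by
  classical
  -- `ι` is an involution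
  have hιι : ∀ x : E, ι (ι x) = x := by
    intro x
    obtain ⟨a, b, rfl⟩ := hgen x
    simp [map_add, map_mul, hιfix, hιθ]
  -- membership criterion for `VsigC`
  have hmem : ∀ (σ : E →+* ℂ) (ξ : ℂ ⊗[ℚ] V), ξ ∈ VsigC E (V := V) σ ↔
      ∀ e : E, actC E e ξ = σ e • ξ := by
    intro σ ξ
    simp [VsigC, Submodule.mem_iInf, LinearMap.mem_ker, LinearMap.sub_apply,
      LinearMap.smul_apply, sub_eq_zero]
  have hact : ∀ (σ : E →+* ℂ) (ξ : ℂ ⊗[ℚ] V), ξ ∈ VsigC E (V := V) σ →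
      ∀ e : E, actC E e ξ = σ e • ξ := fun σ ξ h => (hmem σ ξ).1 h
  -- decomposition of any element as the sum of its projections
  have hdecomp : ∀ ξ : ℂ ⊗[ℚ] V, ξ = ∑ τ : E →+* ℂ, p τ ξ := by
    intro ξ
    obtain ⟨d, rfl⟩ := hInternal.surjective ξ
    have h1 : DirectSum.coeAddMonoidHom (fun σ : E →+* ℂ => VsigC E (V := V) σ) d
        = ∑ τ : E →+* ℂ, ((d τ : ℂ ⊗[ℚ] V)) := by
      conv_lhs => rw [← DirectSum.sum_univ_of d]
      rw [map_sum]
      exact Finset.sum_congr rfl fun τ _ => DirectSum.coeAddMonoidHom_of _ τ (d τ)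
    have hpd : ∀ σ : E →+* ℂ,
        p σ (∑ τ : E →+* ℂ, ((d τ : ℂ ⊗[ℚ] V))) = (d σ : ℂ ⊗[ℚ] V) := by
      intro σ
      rw [map_sum, Finset.sum_eq_single σ]
      · exact hp2 σ _ (d σ).2
      · intro τ _ hτ; exact hp3 σ τ (Ne.symm hτ) _ (d τ).2
      · simp
    show DirectSum.coeAddMonoidHom (fun σ : E →+* ℂ => VsigC E (V := V) σ) d
        = ∑ τ : E →+* ℂ, p τ (DirectSum.coeAddMonoidHom (fun σ : E →+* ℂ => VsigC E (V := V) σ) d)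
    rw [h1]
    exact (Finset.sum_congr rfl fun τ _ => (hpd τ).symm)
  -- projections intertwine the action
  have hact_p : ∀ (e : E) (σ : E →+* ℂ) (ξ : ℂ ⊗[ℚ] V),
      p σ (actC E e ξ) = σ e • p σ ξ := by
    intro e σ ξ
    conv_lhs => rw [hdecomp ξ, map_sum, map_sum]
    have hterm : ∀ τ : E →+* ℂ,
        p σ (actC E e (p τ ξ)) = if τ = σ then σ e • p σ ξ else 0 := by
      intro τ
      rw [hact τ _ (hp1 τ ξ) e, map_smul]
      by_cases h : τ = σ
      · subst h
        rw [hp2 τ _ (hp1 τ ξ)]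
        simp
      · rw [hp3 σ τ (Ne.symm h) _ (hp1 τ ξ)]
        simp [h]
    rw [Finset.sum_congr rfl fun τ _ => hterm τ]
    simp
  -- `actC` on pure tensors
  have hactC_tmul : ∀ (e : E) (c : ℂ) (u : V),
      actC E e (c ⊗ₜ[ℚ] u) = c ⊗ₜ[ℚ] (e • u) := by
    intro e c u
    simp [actC, LinearMap.baseChange_tmul]
  -- adjointness of the action with respect to `B`
  have hadj : ∀ (e : E) (ξ ζ : ℂ ⊗[ℚ] V), B (actC E e ξ) ζ = B ξ (actC E (ι e) ζ) := by
    intro e ξ ζ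
    induction ξ using TensorProduct.induction_on with
    | zero => simp
    | tmul c u =>
      induction ζ using TensorProduct.induction_on with
      | zero => simp
      | tmul c' v =>
        have hΦ : Φ (e • u) v = Φ u (ι e • v) := by
          rw [hΦsmul1, hΦsmul2, hιι]
        rw [hactC_tmul, hactC_tmul, hB, hB, hΦ]
      | add ζ₁ ζ₂ h₁ h₂ => simp [map_add, h₁, h₂]
    | add ξ₁ ξ₂ h₁ h₂ => simp [map_add, h₁, h₂]
  -- produce a separating element
  have hexists : ∀ (σ σ' : E →+* ℂ), σ' ≠ σ.comp ι → ∃ e : E, σ e ≠ σ' (ι e) := by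
    intro σ σ' h
    by_contra hc
    push_neg at hc
    apply h
    ext x
    have h1 := hc (ι x)
    rw [hιι] at h1
    simpa [RingHom.comp_apply] using h1.symm
  -- the vanishing statement
  have hvanish : ∀ (σ σ' : E →+* ℂ), σ' ≠ σ.comp ι →
      ∀ ξ ∈ VsigC E (V := V) σ, ∀ ζ ∈ VsigC E (V := V) σ', B ξ ζ = 0 := by
    intro σ σ' h ξ hξ ζ hζ
    obtain ⟨e, he⟩ := hexists σ σ' h
    have h1 : σ e * B ξ ζ = σ' (ι e) * B ξ ζ := by
      have h2 := hadj e ξ ζ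
      rw [hact σ ξ hξ e, hact σ' ζ hζ (ι e)] at h2
      simpa [smul_eq_mul] using h2
    have h2 : (σ e - σ' (ι e)) * B ξ ζ = 0 := by ring_nf; linear_combination h1
    rcases mul_eq_zero.mp h2 with h3 | h3
    · exact absurd (sub_eq_zero.mp h3) he
    · exact h3
  -- trace as a sum over embeddings
  have htr : ∀ x : E, ((Algebra.trace ℚ E x : ℚ) : ℂ) = ∑ τ : E →+* ℂ, τ x := by
    intro x
    have h1 : algebraMap ℚ ℂ (Algebra.trace ℚ E x) = ∑ φ : E →ₐ[ℚ] ℂ, φ x :=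
      trace_eq_sum_embeddings ℂ
    rw [show ((Algebra.trace ℚ E x : ℚ) : ℂ) = algebraMap ℚ ℂ (Algebra.trace ℚ E x) from
      (eq_ratCast (algebraMap ℚ ℂ) _).symm, h1]
    exact (Fintype.sum_equiv (RingHom.equivRatAlgHom E ℂ) _ _ fun τ => rfl).symm
  -- the key computation
  have key : ∀ (u v : V) (σ : E →+* ℂ),
      B (p σ ((1:ℂ) ⊗ₜ[ℚ] u)) (p (σ.comp ι) ((1:ℂ) ⊗ₜ[ℚ] v)) = σ (Φ u v) := by
    intro u v
    set f : (E →+* ℂ) → ℂ :=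
      fun τ => B (p τ ((1:ℂ) ⊗ₜ[ℚ] u)) (p (τ.comp ι) ((1:ℂ) ⊗ₜ[ℚ] v)) with hf
    have hsum : ∀ e : E, ∑ τ : E →+* ℂ, τ e * f τ = ∑ τ : E →+* ℂ, τ e * τ (Φ u v) := by
      intro e
      have hlhs : B ((1:ℂ) ⊗ₜ[ℚ] (e • u)) ((1:ℂ) ⊗ₜ[ℚ] v) = ∑ τ : E →+* ℂ, τ e * f τ := by
        rw [← hactC_tmul e 1 u]
        conv_lhs => rw [hdecomp (actC E e ((1:ℂ) ⊗ₜ[ℚ] u))]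
        rw [map_sum, LinearMap.sum_apply]
        refine Finset.sum_congr rfl fun τ _ => ?_
        conv_lhs => rw [hdecomp ((1:ℂ) ⊗ₜ[ℚ] v)]
        rw [map_sum, Finset.sum_eq_single (τ.comp ι)]
        · rw [hact_p, map_smul]
          simp [hf, smul_eq_mul]
        · intro τ' _ hτ'
          exact hvanish τ τ' hτ' _ (hp1 τ _) _ (hp1 τ' _)
        · simp
      have hrhs : B ((1:ℂ) ⊗ₜ[ℚ] (e • u)) ((1:ℂ) ⊗ₜ[ℚ] v)
          = ∑ τ : E →+* ℂ, τ e * τ (Φ u v) := by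
        rw [hB, hΦsmul1, one_mul, one_mul, htr]
        exact Finset.sum_congr rfl fun τ _ => map_mul τ e (Φ u v)
      rw [← hlhs, hrhs]
    have li : LinearIndependent ℂ (fun τ : E →+* ℂ => (fun e => τ e : E → ℂ)) :=
      (linearIndependent_monoidHom E ℂ).comp
        (fun τ : E →+* ℂ => (τ : E →* ℂ)) RingHom.coe_monoidHom_injective
    have h0 : ∑ τ' : E →+* ℂ, (f τ' - τ' (Φ u v)) • (fun e => τ' e : E → ℂ) = 0 := by
      funext e
      simp only [Finset.sum_apply, Pi.smul_apply, smul_eq_mul, Pi.zero_apply]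
      have hcalc : (∑ τ' : E →+* ℂ, f τ' * τ' e) = ∑ τ' : E →+* ℂ, τ' (Φ u v) * τ' e :=
        calc (∑ τ' : E →+* ℂ, f τ' * τ' e)
            = ∑ τ' : E →+* ℂ, τ' e * f τ' := Finset.sum_congr rfl fun τ' _ => mul_comm _ _
          _ = ∑ τ' : E →+* ℂ, τ' e * τ' (Φ u v) := hsum e
          _ = ∑ τ' : E →+* ℂ, τ' (Φ u v) * τ' e :=
              Finset.sum_congr rfl fun τ' _ => mul_comm _ _
      simp only [sub_mul]
      rw [Finset.sum_sub_distrib, hcalc, sub_self]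
    intro σ
    have hz := Fintype.linearIndependent_iff.mp li (fun τ' => f τ' - τ' (Φ u v)) h0 σ
    have := sub_eq_zero.mp hz
    simpa [hf] using this
  refine ⟨fun u v σ σ' => ⟨fun h => ?_, fun h => hvanish σ σ' h _ (hp1 σ _) _ (hp1 σ' _)⟩,
    hvanish⟩
  subst h
  exact key u v σ
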